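/- Let (M,H,g) be a sub-Riemannian manifold and V a complement, TM = H ⊕ V. Then there exists a unique partial connection ∇̄ on H in the direction of H compatible with g whose torsion satisfies t(H,H) ⊆ V, i.e. the H-component of the torsion vanishes. Its difference tensor κ from a reference compatible partial connection ∇̄′ with torsion horizontal part t′_H is given by ⟨κ(X)Y₁,Y₂⟩_g = ½(−⟨t′_H(X,Y₁),Y₂⟩_g + ⟨t′_H(Y₁,Y₂),X⟩_g + ⟨t′_H(X,Y₂),Y₁⟩_g). -/

import Mathlib

/-- A partial connection on `H` in the direction of `H`, in the algebraic model
where `C` plays the role of smooth functions, `W` of vector fields, `H ⊆ W` of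
horizontal vector fields and `a X f` is the derivative of the function `f` along
the vector field `X`.  The connection axioms are imposed for horizontal
arguments. -/
structure PartialConn (C W : Type*) [CommRing C] [AddCommGroup W] [Module C W]
    (H : Submodule C W) (a : W → C → C) where
  cov : W → W → W
  mem : ∀ X Y, X ∈ H → Y ∈ H → cov X Y ∈ H
  add_left : ∀ X X' Y, X ∈ H → X' ∈ H → Y ∈ H → cov (X + X') Y = cov X Y + cov X' Y
  smul_left : ∀ (c : C) X Y, X ∈ H → Y ∈ H → cov (c • X) Y = c • cov X Y
  add_right : ∀ X Y Y', X ∈ H → Y ∈ H → Y' ∈ H → cov X (Y + Y') = cov X Y + cov X Y'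
  leibniz : ∀ (c : C) X Y, X ∈ H → Y ∈ H → cov X (c • Y) = a X c • Y + c • cov X Y

/-- **Existence and uniqueness of the compatible partial connection with torsion
in `V` (Lemma 2.6 (c)).**
Given a sub-Riemannian structure `(H,g)` (with a local orthonormal frame `e` of
`H`) and a complement `V` with projection `prH` (so `t′_H = prH ∘ t′`), there is
a unique partial connection `D` on `H` in the direction of `H` compatible with
`g` whose torsion satisfies `t(H,H) ⊆ V`, i.e. `prH (t(X,Y)) = 0`; its
difference `κ(X)Y = D_X Y − D′_X Y` from any reference compatible partial
connection `D′` is given by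
`⟨κ(X)Y₁,Y₂⟩ = ½(−⟨t′_H(X,Y₁),Y₂⟩ + ⟨t′_H(Y₁,Y₂),X⟩ + ⟨t′_H(X,Y₂),Y₁⟩)`. -/
theorem stmt3 {C W : Type*} [CommRing C] [Algebra ℝ C] [AddCommGroup W] [Module C W]
    (H V : Submodule C W) (prH : W →ₗ[C] W)
    (hprH_mem : ∀ x, prH x ∈ H) (hprH_id : ∀ x ∈ H, prH x = x)
    (hprV : ∀ x, x - prH x ∈ V) (hVker : ∀ v ∈ V, prH v = 0)
    (a : W → C → C) (β : W → W → W) (g : W → W → C)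
    (hg_symm : ∀ v w, g v w = g w v)
    (hg_addl : ∀ u v w, g (u + v) w = g u w + g v w)
    (hg_smull : ∀ (c : C) v w, g (c • v) w = c * g v w)
    (hg_nondeg : ∀ v ∈ H, (∀ w ∈ H, g v w = 0) → v = 0)
    (htwo : ∀ c : C, c + c = 0 → c = 0)
    (n : ℕ) (e : Fin n → W) (he : ∀ i, e i ∈ H)
    (horth : ∀ i j, g (e i) (e j) = if i = j then 1 else 0)
    (hspan : ∀ w ∈ H, ∃ c : Fin n → C, w = ∑ i, c i • e i)
    (ha_add₁ : ∀ X Y c, a (X + Y) c = a X c + a Y c)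
    (ha_smul₁ : ∀ (f : C) X c, a (f • X) c = f * a X c)
    (ha_add₂ : ∀ X c c', a X (c + c') = a X c + a X c')
    (ha_mul : ∀ X c c', a X (c * c') = a X c * c' + c * a X c')
    (hβ_anti : ∀ X Y, β X Y = - β Y X)
    (hβ_add₁ : ∀ X Y Z, β (X + Y) Z = β X Z + β Y Z)
    (hβ_leib : ∀ X (f : C) Y, β X (f • Y) = a X f • Y + f • β X Y)
    (D' : PartialConn C W H a)
    (hD'compat : ∀ Z Y₁ Y₂, Z ∈ H → Y₁ ∈ H → Y₂ ∈ H →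
      a Z (g Y₁ Y₂) = g (D'.cov Z Y₁) Y₂ + g Y₁ (D'.cov Z Y₂)) :
    ∃ D : PartialConn C W H a,
      ((∀ Z Y₁ Y₂, Z ∈ H → Y₁ ∈ H → Y₂ ∈ H →
          a Z (g Y₁ Y₂) = g (D.cov Z Y₁) Y₂ + g Y₁ (D.cov Z Y₂)) ∧
        (∀ X Y, X ∈ H → Y ∈ H → prH (D.cov X Y - D.cov Y X - β X Y) = 0) ∧
        (∀ X Y₁ Y₂, X ∈ H → Y₁ ∈ H → Y₂ ∈ H →
          g (D.cov X Y₁ - D'.cov X Y₁) Y₂ =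
            (1 / 2 : ℝ) •
              (- g (prH (D'.cov X Y₁ - D'.cov Y₁ X - β X Y₁)) Y₂
                + g (prH (D'.cov Y₁ Y₂ - D'.cov Y₂ Y₁ - β Y₁ Y₂)) X
                + g (prH (D'.cov X Y₂ - D'.cov Y₂ X - β X Y₂)) Y₁))) ∧
      ∀ D'' : PartialConn C W H a,
        (∀ Z Y₁ Y₂, Z ∈ H → Y₁ ∈ H → Y₂ ∈ H →
          a Z (g Y₁ Y₂) = g (D''.cov Z Y₁) Y₂ + g Y₁ (D''.cov Z Y₂)) →
        (∀ X Y, X ∈ H → Y ∈ H → prH (D''.cov X Y - D''.cov Y X - β X Y) = 0) →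
        ∀ X Y, X ∈ H → Y ∈ H → D''.cov X Y = D.cov X Y := by
  classical
  -- the scalar 1/2 in C
  obtain ⟨h, hhdef⟩ : ∃ h : C, h = algebraMap ℝ C (1/2) := ⟨_, rfl⟩
  have hsmul_h : ∀ x : C, (1/2 : ℝ) • x = h * x := fun x => by
    rw [hhdef]; exact Algebra.smul_def _ _
  have hhalf : ∀ x : C, h * (x + x) = x := by
    intro x
    have h2 : h * 2 = 1 := by
      rw [hhdef, ← map_ofNat (algebraMap ℝ C) 2, ← map_mul]
      norm_num
    calc h * (x + x) = h * 2 * x := by ring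
      _ = x := by rw [h2, one_mul]
  -- metric helpers
  have hg_zerol : ∀ w, g 0 w = 0 := fun w => by
    have := hg_smull 0 0 w; simpa using this
  have hg_negl : ∀ v w, g (-v) w = - g v w := fun v w => by
    have := hg_smull (-1) v w; simpa using this
  have hg_subl : ∀ u v w, g (u - v) w = g u w - g v w := fun u v w => by
    rw [sub_eq_add_neg, hg_addl, hg_negl]; ring
  have hg_addr : ∀ u v w, g u (v + w) = g u v + g u w := fun u v w => by
    rw [hg_symm, hg_addl, hg_symm v u, hg_symm w u]
  have hg_smulr : ∀ (c : C) u v, g u (c • v) = c * g u v := fun c u v => by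
    rw [hg_symm, hg_smull, hg_symm]
  have hgsum : ∀ (v : Fin n → W) w, g (∑ i, v i) w = ∑ i, g (v i) w := by
    intro v w
    have key : ∀ s : Finset (Fin n), g (∑ i ∈ s, v i) w = ∑ i ∈ s, g (v i) w := by
      intro s
      induction s using Finset.induction_on with
      | empty => simpa using hg_zerol w
      | insert _ _ hnot ih =>
        rw [Finset.sum_insert hnot, Finset.sum_insert hnot, hg_addl, ih]
    exact key _
  have hgsumr : ∀ v (c : Fin n → C), g v (∑ i, c i • e i) = ∑ i, c i * g v (e i) := by
    intro v c
    rw [hg_symm, hgsum]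
    exact Finset.sum_congr rfl fun i _ => by rw [hg_smull, hg_symm]
  -- the horizontal torsion of the reference connection
  obtain ⟨t, htapp⟩ : ∃ t : W → W → W,
      ∀ X Y, t X Y = prH (D'.cov X Y - D'.cov Y X - β X Y) := ⟨_, fun _ _ => rfl⟩
  have ht_mem : ∀ X Y, t X Y ∈ H := fun X Y => by rw [htapp]; exact hprH_mem _
  have ht_anti : ∀ X Y, t X Y = - t Y X := by
    intro X Y
    have key : D'.cov X Y - D'.cov Y X - β X Y = -(D'.cov Y X - D'.cov X Y - β Y X) := by
      rw [hβ_anti X Y]; abel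
    rw [htapp, htapp, key, map_neg]
  have ht_addl : ∀ X X' Y, X ∈ H → X' ∈ H → Y ∈ H → t (X + X') Y = t X Y + t X' Y := by
    intro X X' Y hX hX' hY
    rw [htapp, htapp, htapp, ← map_add]
    congr 1
    rw [D'.add_left X X' Y hX hX' hY, D'.add_right Y X X' hY hX hX', hβ_add₁]
    abel
  have ht_smull : ∀ (f : C) X Y, X ∈ H → Y ∈ H → t (f • X) Y = f • t X Y := by
    intro f X Y hX hY
    rw [htapp, htapp, ← map_smul]
    congr 1
    rw [D'.smul_left f X Y hX hY, D'.leibniz f Y X hY hX, hβ_anti (f • X) Y,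
      hβ_leib Y f X, hβ_anti X Y]
    rw [smul_sub, smul_sub, smul_neg]
    abel
  have ht_addr : ∀ X Y Y', X ∈ H → Y ∈ H → Y' ∈ H → t X (Y + Y') = t X Y + t X Y' := by
    intro X Y Y' hX hY hY'
    rw [ht_anti X (Y + Y'), ht_addl Y Y' X hY hY' hX, ht_anti Y X, ht_anti Y' X]
    abel
  have ht_smulr : ∀ (f : C) X Y, X ∈ H → Y ∈ H → t X (f • Y) = f • t X Y := by
    intro f X Y hX hY
    rw [ht_anti X (f • Y), ht_smull f Y X hY hX, ht_anti Y X, smul_neg, neg_neg]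
  have ht_zeror : ∀ X, X ∈ H → t X 0 = 0 := by
    intro X hX
    have := ht_smulr 0 X 0 hX H.zero_mem
    simpa using this
  have ht_sumr : ∀ X (c : Fin n → C), X ∈ H →
      t X (∑ i, c i • e i) = ∑ i, c i • t X (e i) := by
    intro X c hX
    have key : ∀ s : Finset (Fin n),
        t X (∑ i ∈ s, c i • e i) = ∑ i ∈ s, c i • t X (e i) := by
      intro s
      induction s using Finset.induction_on with
      | empty => simpa using ht_zeror X hX
      | insert _ _ hnot ih =>
        rw [Finset.sum_insert hnot, Finset.sum_insert hnot,
          ht_addr X _ _ hX (H.smul_mem _ (he _))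
            (Submodule.sum_mem _ fun i _ => H.smul_mem _ (he i)),
          ht_smulr _ X _ hX (he _), ih]
    exact key _
  -- the Koszul-type difference tensor
  obtain ⟨F, hFapp⟩ : ∃ F : W → W → W → C, ∀ X Y₁ Y₂,
      F X Y₁ Y₂ = h * (- g (t X Y₁) Y₂ + g (t Y₁ Y₂) X + g (t X Y₂) Y₁) :=
    ⟨_, fun _ _ _ => rfl⟩
  obtain ⟨κ, hκapp⟩ : ∃ κ : W → W → W, ∀ X Y, κ X Y = ∑ i, F X Y (e i) • e i :=
    ⟨_, fun _ _ => rfl⟩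
  have hκ_mem : ∀ X Y, κ X Y ∈ H := fun X Y => by
    rw [hκapp]; exact Submodule.sum_mem _ fun i _ => H.smul_mem _ (he i)
  have hF_addl : ∀ X X' Y₁ Y₂, X ∈ H → X' ∈ H → Y₁ ∈ H → Y₂ ∈ H →
      F (X + X') Y₁ Y₂ = F X Y₁ Y₂ + F X' Y₁ Y₂ := by
    intro X X' Y₁ Y₂ hX hX' hY₁ hY₂
    rw [hFapp, hFapp, hFapp, ht_addl X X' Y₁ hX hX' hY₁, ht_addl X X' Y₂ hX hX' hY₂,
      hg_addl, hg_addl, hg_addr]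
    ring
  have hF_smull : ∀ (f : C) X Y₁ Y₂, X ∈ H → Y₁ ∈ H → Y₂ ∈ H →
      F (f • X) Y₁ Y₂ = f * F X Y₁ Y₂ := by
    intro f X Y₁ Y₂ hX hY₁ hY₂
    rw [hFapp, hFapp, ht_smull f X Y₁ hX hY₁, ht_smull f X Y₂ hX hY₂,
      hg_smull, hg_smull, hg_smulr]
    ring
  have hF_addm : ∀ X Y₁ Y₁' Y₂, X ∈ H → Y₁ ∈ H → Y₁' ∈ H → Y₂ ∈ H →
      F X (Y₁ + Y₁') Y₂ = F X Y₁ Y₂ + F X Y₁' Y₂ := by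
    intro X Y₁ Y₁' Y₂ hX hY₁ hY₁' hY₂
    rw [hFapp, hFapp, hFapp, ht_addr X Y₁ Y₁' hX hY₁ hY₁', ht_addl Y₁ Y₁' Y₂ hY₁ hY₁' hY₂,
      hg_addl, hg_addl, hg_addr]
    ring
  have hF_smulm : ∀ (f : C) X Y₁ Y₂, X ∈ H → Y₁ ∈ H → Y₂ ∈ H →
      F X (f • Y₁) Y₂ = f * F X Y₁ Y₂ := by
    intro f X Y₁ Y₂ hX hY₁ hY₂
    rw [hFapp, hFapp, ht_smulr f X Y₁ hX hY₁, ht_smull f Y₁ Y₂ hY₁ hY₂,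
      hg_smull, hg_smull, hg_smulr]
    ring
  -- the key metric identity for κ
  have hκ_g : ∀ X Y₁ Y₂, X ∈ H → Y₁ ∈ H → Y₂ ∈ H → g (κ X Y₁) Y₂ = F X Y₁ Y₂ := by
    intro X Y₁ Y₂ hX hY₁ hY₂
    obtain ⟨c, hc⟩ := hspan Y₂ hY₂
    have hei : ∀ i, g (e i) Y₂ = c i := by
      intro i
      rw [hc, hgsumr]
      simp [horth, Finset.sum_ite_eq]
    have hlhs : g (κ X Y₁) Y₂ = ∑ i, F X Y₁ (e i) * c i := by
      rw [hκapp, hgsum]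
      exact Finset.sum_congr rfl fun i _ => by rw [hg_smull, hei]
    have hrhs : F X Y₁ Y₂ = ∑ i, F X Y₁ (e i) * c i := by
      rw [hFapp]
      conv_lhs => rw [hc]
      rw [hgsumr, ht_sumr Y₁ c hY₁, hgsum, ht_sumr X c hX, hgsum]
      simp only [hg_smull]
      rw [← Finset.sum_neg_distrib, ← Finset.sum_add_distrib, ← Finset.sum_add_distrib,
        Finset.mul_sum]
      exact Finset.sum_congr rfl fun i _ => by rw [hFapp]; ring
    rw [hlhs, hrhs]
  have hF_swap : ∀ Z Y₁ Y₂, F Z Y₁ Y₂ + F Z Y₂ Y₁ = 0 := by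
    intro Z Y₁ Y₂
    rw [hFapp, hFapp, ht_anti Y₂ Y₁, hg_negl]
    ring
  -- compatibility of the new connection
  have hDcompat : ∀ Z Y₁ Y₂, Z ∈ H → Y₁ ∈ H → Y₂ ∈ H →
      a Z (g Y₁ Y₂) = g (D'.cov Z Y₁ + κ Z Y₁) Y₂ + g Y₁ (D'.cov Z Y₂ + κ Z Y₂) := by
    intro Z Y₁ Y₂ hZ hY₁ hY₂
    rw [hg_addl, hg_symm Y₁ (D'.cov Z Y₂ + κ Z Y₂), hg_addl, hκ_g Z Y₁ Y₂ hZ hY₁ hY₂, hκ_g Z Y₂ Y₁ hZ hY₂ hY₁,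
      hD'compat Z Y₁ Y₂ hZ hY₁ hY₂, hg_symm Y₁ (D'.cov Z Y₂)]
    linear_combination -hF_swap Z Y₁ Y₂
  -- torsion of the new connection is vertical
  have hκ_tor : ∀ X Y, X ∈ H → Y ∈ H → t X Y + κ X Y - κ Y X = 0 := by
    intro X Y hX hY
    apply hg_nondeg _ (H.sub_mem (H.add_mem (ht_mem X Y) (hκ_mem X Y)) (hκ_mem Y X))
    intro Z hZ
    rw [hg_subl, hg_addl, hκ_g X Y Z hX hY hZ, hκ_g Y X Z hY hX hZ, hFapp, hFapp,
      ht_anti Y X, hg_negl]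
    linear_combination - hhalf (g (t X Y) Z)
  have hDtor : ∀ X Y, X ∈ H → Y ∈ H →
      prH (D'.cov X Y + κ X Y - (D'.cov Y X + κ Y X) - β X Y) = 0 := by
    intro X Y hX hY
    have harr : D'.cov X Y + κ X Y - (D'.cov Y X + κ Y X) - β X Y
        = (D'.cov X Y - D'.cov Y X - β X Y) + (κ X Y - κ Y X) := by abel
    rw [harr, map_add, ← htapp X Y, map_sub, hprH_id _ (hκ_mem X Y), hprH_id _ (hκ_mem Y X)]
    have := hκ_tor X Y hX hY
    have goal : t X Y + (κ X Y - κ Y X) = 0 := by rw [← this]; abel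
    exact goal
  refine ⟨⟨fun X Y => D'.cov X Y + κ X Y,
      fun X Y hX hY => H.add_mem (D'.mem X Y hX hY) (hκ_mem X Y), ?_, ?_, ?_, ?_⟩,
    ⟨?_, ?_, ?_⟩, ?_⟩
  · -- add_left
    intro X X' Y hX hX' hY
    beta_reduce
    rw [D'.add_left X X' Y hX hX' hY]
    have hκadd : κ (X + X') Y = κ X Y + κ X' Y := by
      rw [hκapp, hκapp, hκapp, ← Finset.sum_add_distrib]
      exact Finset.sum_congr rfl fun i _ => by
        rw [hF_addl X X' Y (e i) hX hX' hY (he i), add_smul]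
    rw [hκadd]; abel
  · -- smul_left
    intro f X Y hX hY
    beta_reduce
    rw [D'.smul_left f X Y hX hY]
    have hκs : κ (f • X) Y = f • κ X Y := by
      rw [hκapp, hκapp, Finset.smul_sum]
      exact Finset.sum_congr rfl fun i _ => by
        rw [hF_smull f X Y (e i) hX hY (he i), mul_smul]
    rw [hκs, smul_add]
  · -- add_right
    intro X Y Y' hX hY hY'
    beta_reduce
    rw [D'.add_right X Y Y' hX hY hY']
    have hκadd : κ X (Y + Y') = κ X Y + κ X Y' := by
      rw [hκapp, hκapp, hκapp, ← Finset.sum_add_distrib]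
      exact Finset.sum_congr rfl fun i _ => by
        rw [hF_addm X Y Y' (e i) hX hY hY' (he i), add_smul]
    rw [hκadd]; abel
  · -- leibniz
    intro f X Y hX hY
    beta_reduce
    rw [D'.leibniz f X Y hX hY]
    have hκs : κ X (f • Y) = f • κ X Y := by
      rw [hκapp, hκapp, Finset.smul_sum]
      exact Finset.sum_congr rfl fun i _ => by
        rw [hF_smulm f X Y (e i) hX hY (he i), mul_smul]
    rw [hκs, smul_add]; abel
  · -- compatibility
    exact hDcompat
  · -- torsion is vertical
    exact fun X Y hX hY => hDtor X Y hX hY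
  · -- the difference formula
    intro X Y₁ Y₂ hX hY₁ hY₂
    show g (D'.cov X Y₁ + κ X Y₁ - D'.cov X Y₁) Y₂ = _
    rw [add_sub_cancel_left, hκ_g X Y₁ Y₂ hX hY₁ hY₂, hsmul_h, hFapp,
      htapp, htapp, htapp]
  · -- uniqueness
    intro D'' hcompat'' htor'' X Y hX hY
    obtain ⟨δ, hδapp⟩ : ∃ δ : W → W → W,
        ∀ X Y, δ X Y = D''.cov X Y - (D'.cov X Y + κ X Y) := ⟨_, fun _ _ => rfl⟩
    have hδmem : ∀ X Y, X ∈ H → Y ∈ H → δ X Y ∈ H := fun X Y hX hY => by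
      rw [hδapp]
      exact H.sub_mem (D''.mem X Y hX hY) (H.add_mem (D'.mem X Y hX hY) (hκ_mem X Y))
    have hδ_symm : ∀ X Y, X ∈ H → Y ∈ H → δ X Y = δ Y X := by
      intro X Y hX hY
      have hmem : δ X Y - δ Y X ∈ H := H.sub_mem (hδmem X Y hX hY) (hδmem Y X hY hX)
      have harr : δ X Y - δ Y X =
          (D''.cov X Y - D''.cov Y X - β X Y)
            - (D'.cov X Y + κ X Y - (D'.cov Y X + κ Y X) - β X Y) := by
        rw [hδapp, hδapp]; abel
      have hz : prH (δ X Y - δ Y X) = 0 := by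
        rw [harr, map_sub, htor'' X Y hX hY, hDtor X Y hX hY, sub_zero]
      have h0 : δ X Y - δ Y X = 0 := by rw [← hprH_id _ hmem, hz]
      exact sub_eq_zero.mp h0
    have hδ_alt : ∀ X Y Z, X ∈ H → Y ∈ H → Z ∈ H → g (δ X Y) Z = - g (δ X Z) Y := by
      intro X Y Z hX hY hZ
      have h1 := hcompat'' X Y Z hX hY hZ
      have h2 := hDcompat X Y Z hX hY hZ
      rw [hδapp, hδapp, hg_subl, hg_subl]
      linear_combination h2 - h1 - hg_symm Y (D''.cov X Z)
        + hg_symm Y (D'.cov X Z + κ X Z)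
    have hδ_zero : ∀ X Y Z, X ∈ H → Y ∈ H → Z ∈ H → g (δ X Y) Z = 0 := by
      intro X Y Z hX hY hZ
      have key : g (δ X Y) Z = - g (δ X Y) Z := by
        calc g (δ X Y) Z = g (δ Y X) Z := by rw [hδ_symm X Y hX hY]
          _ = - g (δ Y Z) X := hδ_alt Y X Z hY hX hZ
          _ = - g (δ Z Y) X := by rw [hδ_symm Y Z hY hZ]
          _ = g (δ Z X) Y := by rw [hδ_alt Z Y X hZ hY hX, neg_neg]
          _ = g (δ X Z) Y := by rw [hδ_symm Z X hZ hX]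
          _ = - g (δ X Y) Z := hδ_alt X Z Y hX hZ hY
      exact htwo _ (by linear_combination key)
    have hfin : δ X Y = 0 :=
      hg_nondeg _ (hδmem X Y hX hY) fun Z hZ => hδ_zero X Y Z hX hY hZ
    have h0 : D''.cov X Y - (D'.cov X Y + κ X Y) = 0 := by rw [← hδapp, hfin]
    exact sub_eq_zero.mp h0
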